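/- For every integer k ≥ 1, the function p_k is convex on the interval [0, 1/2]. -/

import Mathlib

def p (k : ℕ) (x : ℝ) : ℝ :=
  ∑ ℓ ∈ Finset.range k, (Nat.choose (2*k-1) ℓ : ℝ) * x^(2*k-1-ℓ) * (1-x)^ℓ

lemma p_hasDerivAt (j : ℕ) (x : ℝ) :
    HasDerivAt (p (j+1))
      ((Nat.choose (2*j+1) j : ℝ) * (j+1) * x^j * (1-x)^j) x := by
  -- f ℓ = a (ℓ-1), telescoping helper
  set a : ℕ → ℝ := fun ℓ =>
    (Nat.choose (2*j+1) ℓ : ℝ) * (2*j+1-ℓ : ℕ) * x^(2*j-ℓ) * (1-x)^ℓ with ha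
  set f : ℕ → ℝ := fun ℓ => if ℓ = 0 then 0 else a (ℓ-1) with hf
  have hterm : ∀ ℓ ∈ Finset.range (j+1),
      HasDerivAt (fun x : ℝ => (Nat.choose (2*(j+1)-1) ℓ : ℝ) * x^(2*(j+1)-1-ℓ) * (1-x)^ℓ)
        (f (ℓ+1) - f ℓ) x := by
    intro ℓ hℓ
    rw [Finset.mem_range] at hℓ
    have hℓj : ℓ ≤ j := Nat.lt_succ_iff.mp hℓ
    have h1 : 2*(j+1)-1 = 2*j+1 := by omega
    have h2 : 2*(j+1)-1-ℓ = (2*j-ℓ)+1 := by omega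
    have hx1 : HasDerivAt (fun x : ℝ => x^((2*j-ℓ)+1))
        (((2*j-ℓ)+1 : ℕ) * x^(2*j-ℓ)) x := by
      simpa using hasDerivAt_pow ((2*j-ℓ)+1) x
    have hx2 : HasDerivAt (fun x : ℝ => (1-x)^ℓ)
        ((ℓ : ℕ) * (1-x)^(ℓ-1) * (-1)) x := by
      exact HasDerivAt.fun_pow ((hasDerivAt_id x).const_sub 1) ℓ
    have := ((hx1.const_mul ((Nat.choose (2*(j+1)-1) ℓ : ℝ))).fun_mul hx2)
    rw [h2]
    refine this.congr_deriv (Eq.symm ?_)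
    rw [h1]
    cases ℓ with
    | zero =>
      simp only [hf, ha, if_pos, pow_zero, Nat.cast_zero]
      rw [Nat.sub_zero, Nat.sub_zero]
      push_cast
      ring
    | succ m =>
      have hm : m ≤ 2*j := by omega
      have key : (Nat.choose (2*j+1) (m+1) : ℝ) * (m+1) =
          (Nat.choose (2*j+1) m : ℝ) * (2*j+1-m : ℕ) := by
        have := Nat.choose_succ_right_eq (2*j+1) m
        exact_mod_cast congrArg (Nat.cast (R := ℝ)) this
      simp only [hf, ha, Nat.succ_ne_zero, if_false, Nat.add_sub_cancel]
      have e1 : 2*j+1-(m+1) = 2*j-m := by omega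
      have e2 : 2*j-(m+1)+1 = 2*j-m := by omega
      rw [e1, e2]
      push_cast
      linear_combination (x^(2*j-m) * (1-x)^m) * key
  have hsum : HasDerivAt (p (j+1))
      (∑ ℓ ∈ Finset.range (j+1), (f (ℓ+1) - f ℓ)) x :=
    HasDerivAt.fun_sum hterm
  rw [Finset.sum_range_sub f] at hsum
  have : f (j+1) - f 0 = (Nat.choose (2*j+1) j : ℝ) * (j+1) * x^j * (1-x)^j := by
    simp only [hf, ha, Nat.succ_ne_zero, if_false, Nat.add_sub_cancel]
    have e1 : 2*j+1-j = j+1 := by omega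
    have e2 : 2*j-j = j := by omega
    rw [e1, e2]
    push_cast
    ring
  rwa [this] at hsum

theorem p_convexOn (k : ℕ) (hk : 1 ≤ k) :
    ConvexOn ℝ (Set.Icc (0:ℝ) (1/2)) (p k) := by
  obtain ⟨j, rfl⟩ : ∃ j, k = j+1 := ⟨k-1, (Nat.succ_pred_eq_of_pos hk).symm⟩
  have hderiv : ∀ x : ℝ, deriv (p (j+1)) x =
      (Nat.choose (2*j+1) j : ℝ) * (j+1) * x^j * (1-x)^j :=
    fun x => (p_hasDerivAt j x).deriv
  have hdiff : Differentiable ℝ (p (j+1)) := fun x => (p_hasDerivAt j x).differentiableAt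
  apply MonotoneOn.convexOn_of_deriv (convex_Icc _ _) hdiff.continuous.continuousOn
    (hdiff.differentiableOn)
  intro x hx y hy hxy
  rw [interior_Icc, Set.mem_Ioo] at hx hy
  rw [hderiv, hderiv]
  have h1 : x * (1-x) ≤ y * (1-y) := by nlinarith [hx.1, hx.2, hy.1, hy.2]
  have h2 : 0 ≤ x * (1-x) := by nlinarith [hx.1, hx.2]
  have h3 : (x*(1-x))^j ≤ (y*(1-y))^j := pow_le_pow_left₀ h2 h1 j
  have hc : (0:ℝ) ≤ (Nat.choose (2*j+1) j : ℝ) * (j+1) := by positivity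
  calc (Nat.choose (2*j+1) j : ℝ) * (j+1) * x^j * (1-x)^j
      = (Nat.choose (2*j+1) j : ℝ) * (j+1) * (x*(1-x))^j := by rw [mul_pow]; ring
    _ ≤ (Nat.choose (2*j+1) j : ℝ) * (j+1) * (y*(1-y))^j :=
        mul_le_mul_of_nonneg_left h3 hc
    _ = (Nat.choose (2*j+1) j : ℝ) * (j+1) * y^j * (1-y)^j := by rw [mul_pow]; ring
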